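/- arXiv:2604.01559 — 2 statements merged into one kernel-verified Lean document; each statement's English description precedes it below -/
import Mathlib

section
/- Let k, l ≥ 1 be integers. Then ∫_{{(r₁,r₂) ∈ (0,1)² : r₁^k r₂^l < ε}} r₁^{2k−1} r₂^{2l+1} dr₁ dr₂ = ε²/(4k) − l ε^{2+2/l}/(4k(l+1)) for all 0 < ε < 1. -/
open MeasureTheory Set Filter

lemma aux_Ioo_pow (n m : ℕ) (h : n + 1 = m) (b : ℝ) (hb : 0 ≤ b) :
    ∫ x in Ioo (0:ℝ) b, x ^ n = b ^ m / (m:ℝ) := by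
  subst h
  rw [← integral_Ioc_eq_integral_Ioo, ← intervalIntegral.integral_of_le hb,
    integral_pow]
  simp

/-- For integers `k, l ≥ 1` and `0 < ε < 1`,
`∫_{{(r₁,r₂) ∈ (0,1)² : r₁^k r₂^l < ε}} r₁^{2k−1} r₂^{2l+1} dr₁ dr₂
  = ε²/(4k) − l ε^{2+2/l}/(4k(l+1))`. -/
theorem stmt_7 (k l : ℕ) (hk : 1 ≤ k) (hl : 1 ≤ l) :
    ∀ ε ∈ Set.Ioo (0:ℝ) 1,
      (∫ p in {p : ℝ × ℝ | 0 < p.1 ∧ p.1 < 1 ∧ 0 < p.2 ∧ p.2 < 1 ∧ p.1^k * p.2^l < ε},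
        p.1 ^ (2*k - 1) * p.2 ^ (2*l + 1))
      = ε^2 / (4*(k:ℝ)) - (l:ℝ) * ε ^ ((2:ℝ) + 2/(l:ℝ)) / (4*(k:ℝ)*((l:ℝ)+1)) := by
  rintro ε ⟨hε0, hε1⟩
  have hk0 : (0:ℝ) < k := by exact_mod_cast hk
  have hl0 : (0:ℝ) < l := by exact_mod_cast hl
  set δ : ℝ := ε ^ ((l:ℝ)⁻¹) with hδdef
  have hδ0 : 0 < δ := Real.rpow_pos_of_pos hε0 _
  have hδ1 : δ < 1 := Real.rpow_lt_one hε0.le hε1 (by positivity)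
  have hδl : δ ^ l = ε := Real.rpow_inv_natCast_pow hε0.le (by omega)
  set S : Set (ℝ×ℝ) :=
    {p : ℝ × ℝ | 0 < p.1 ∧ p.1 < 1 ∧ 0 < p.2 ∧ p.2 < 1 ∧ p.1^k * p.2^l < ε} with hSdef
  set f : ℝ × ℝ → ℝ := fun p => p.1 ^ (2*k-1) * p.2 ^ (2*l+1) with hfdef
  have hS : MeasurableSet S := by
    simp only [hSdef, Set.setOf_and]
    repeat' apply MeasurableSet.inter
    · exact measurableSet_lt measurable_const measurable_fst
    · exact measurableSet_lt measurable_fst measurable_const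
    · exact measurableSet_lt measurable_const measurable_snd
    · exact measurableSet_lt measurable_snd measurable_const
    · exact measurableSet_lt ((measurable_fst.pow_const k).mul
        (measurable_snd.pow_const l)) measurable_const
  have hfc : Continuous f := by fun_prop
  have hsub : S ⊆ (Icc (0:ℝ) 1) ×ˢ (Icc (0:ℝ) 1) := by
    rintro ⟨x, y⟩ ⟨h1, h2, h3, h4, -⟩
    exact ⟨⟨h1.le, h2.le⟩, ⟨h3.le, h4.le⟩⟩
  have hint : IntegrableOn f S := by
    exact (hfc.continuousOn.integrableOn_compact (isCompact_Icc.prod isCompact_Icc)).mono_set hsub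
  have hind : Integrable (S.indicator f) := (integrable_indicator_iff hS).mpr hint
  have step1 : (∫ p in S, f p) = ∫ y : ℝ, ∫ x : ℝ, S.indicator f (x, y) := by
    rw [← integral_indicator hS]
    rw [Measure.volume_eq_prod]
    exact integral_prod_symm _ (by rwa [← Measure.volume_eq_prod])
  set g : ℝ → ℝ := Set.indicator (Ioo (0:ℝ) 1)
    (fun y => if y ≤ δ then y^(2*l+1)/(2*(k:ℝ)) else ε^2*y/(2*(k:ℝ))) with hgdef
  have hkey : ∀ y : ℝ, (fun x => S.indicator f (x, y))
      = Set.indicator {x | (x, y) ∈ S} (fun x => x ^ (2*k-1) * y ^ (2*l+1)) := by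
    intro y
    funext x
    simp [Set.indicator_apply, hfdef]
  have hgy : ∀ y : ℝ, (∫ x : ℝ, S.indicator f (x, y)) = g y := by
    intro y
    by_cases hy : y ∈ Ioo (0:ℝ) 1
    · obtain ⟨hy0, hy1⟩ := hy
      by_cases hyδ : y ≤ δ
      · have hyl : y ^ l ≤ ε := by
          calc y ^ l ≤ δ ^ l := pow_le_pow_left₀ hy0.le hyδ l
          _ = ε := hδl
        have hsl : {x | (x, y) ∈ S} = Ioo (0:ℝ) 1 := by
          ext x
          simp only [hSdef, Set.mem_setOf_eq, Set.mem_Ioo]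
          constructor
          · rintro ⟨h1, h2, -⟩; exact ⟨h1, h2⟩
          · rintro ⟨h1, h2⟩
            refine ⟨h1, h2, hy0, hy1, ?_⟩
            have hxk : x ^ k < 1 := pow_lt_one₀ h1.le h2 (by omega)
            calc x ^ k * y ^ l < 1 * y ^ l :=
                mul_lt_mul_of_pos_right hxk (pow_pos hy0 l)
            _ = y ^ l := one_mul _
            _ ≤ ε := hyl
        rw [hkey, integral_indicator (by rw [hsl]; exact measurableSet_Ioo), hsl,
          integral_mul_const, aux_Ioo_pow (2*k-1) (2*k) (by omega) 1 zero_le_one,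
          hgdef, Set.indicator_of_mem (Set.mem_Ioo.mpr ⟨hy0, hy1⟩), if_pos hyδ]
        push_cast
        ring
      · push_neg at hyδ
        have hyε : ε < y ^ l := by
          calc ε = δ ^ l := hδl.symm
          _ < y ^ l := pow_lt_pow_left₀ hyδ hδ0.le (by omega)
        have hq0 : 0 < ε / y ^ l := div_pos hε0 (pow_pos hy0 l)
        have hq1 : ε / y ^ l < 1 := (div_lt_one (pow_pos hy0 l)).mpr hyε
        set c : ℝ := (ε / y ^ l) ^ ((k:ℝ)⁻¹) with hc
        have hc0 : 0 < c := Real.rpow_pos_of_pos hq0 _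
        have hc1 : c < 1 := Real.rpow_lt_one hq0.le hq1 (by positivity)
        have hck : c ^ k = ε / y ^ l := Real.rpow_inv_natCast_pow hq0.le (by omega)
        have hsl : {x | (x, y) ∈ S} = Ioo (0:ℝ) c := by
          ext x
          simp only [hSdef, Set.mem_setOf_eq, Set.mem_Ioo]
          constructor
          · rintro ⟨h1, h2, -, -, h5⟩
            refine ⟨h1, ?_⟩
            have hxc : x ^ k < c ^ k := by
              rw [hck, lt_div_iff₀ (pow_pos hy0 l)]; exact h5
            exact lt_of_pow_lt_pow_left₀ k hc0.le hxc
          · rintro ⟨h1, h2⟩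
            refine ⟨h1, h2.trans hc1, hy0, hy1, ?_⟩
            have hxc : x ^ k < c ^ k := pow_lt_pow_left₀ h2 h1.le (by omega)
            rw [hck] at hxc
            rwa [← lt_div_iff₀ (pow_pos hy0 l)]
        have hc2k : c ^ (2*k) = ε^2 / y ^ (2*l) := by
          rw [mul_comm 2 k, pow_mul, hck, div_pow, ← pow_mul, mul_comm l 2]
        rw [hkey, integral_indicator (by rw [hsl]; exact measurableSet_Ioo), hsl,
          integral_mul_const, aux_Ioo_pow (2*k-1) (2*k) (by omega) c hc0.le, hc2k,
          hgdef, Set.indicator_of_mem (Set.mem_Ioo.mpr ⟨hy0, hy1⟩), if_neg (not_le.mpr hyδ)]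
        have hy2l : y ^ (2*l+1) = y ^ (2*l) * y := pow_succ y (2*l)
        rw [hy2l]
        push_cast
        field_simp
    · have h1 : ∀ x : ℝ, S.indicator f (x, y) = 0 := by
        intro x
        apply Set.indicator_of_notMem
        rintro ⟨-, -, h3, h4, -⟩
        exact hy ⟨h3, h4⟩
      rw [hgdef, Set.indicator_of_notMem hy]
      simp only [h1, integral_zero]
  -- now compute ∫ g
  set E : ℝ := ε ^ ((2:ℝ) + 2/(l:ℝ)) with hEdef
  have hδ2l2 : δ ^ (2*l+2) = E := by
    rw [hδdef, hEdef, ← Real.rpow_natCast (ε ^ ((l:ℝ)⁻¹)) (2*l+2),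
      ← Real.rpow_mul hε0.le]
    have hexp : ((l:ℝ))⁻¹ * (((2*l+2 : ℕ):ℝ)) = 2 + 2/(l:ℝ) := by
      have : (l:ℝ) ≠ 0 := hl0.ne'
      push_cast
      field_simp
    rw [hexp]
  have hεδ2 : ε^2 * δ^2 = E := by
    rw [hδdef, hEdef, ← Real.rpow_natCast (ε ^ ((l:ℝ)⁻¹)) 2,
      ← Real.rpow_mul hε0.le, ← Real.rpow_natCast ε 2, ← Real.rpow_add hε0]
    have hexp : (((2:ℕ):ℝ)) + ((l:ℝ))⁻¹ * (((2:ℕ):ℝ)) = 2 + 2/(l:ℝ) := by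
      push_cast
      rw [div_eq_mul_inv]
      ring
    rw [hexp]
  have hgint : (∫ y : ℝ, g y)
      = (∫ y in Ioc (0:ℝ) δ, y^(2*l+1)/(2*(k:ℝ))) + ∫ y in Ioc δ 1, ε^2*y/(2*(k:ℝ)) := by
    rw [hgdef, integral_indicator measurableSet_Ioo, ← integral_Ioc_eq_integral_Ioo,
      ← Set.Ioc_union_Ioc_eq_Ioc hδ0.le hδ1.le]
    rw [setIntegral_union (Set.Ioc_disjoint_Ioc_of_le le_rfl) measurableSet_Ioc]
    · congr 1
      · exact setIntegral_congr_fun measurableSet_Ioc (fun y hy => if_pos hy.2)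
      · exact setIntegral_congr_fun measurableSet_Ioc
          (fun y hy => if_neg (not_le.mpr hy.1))
    · apply (integrableOn_congr_fun (fun y hy => (if_pos hy.2 : _ = y^(2*l+1)/(2*(k:ℝ)))) measurableSet_Ioc).mpr
      exact (Continuous.integrableOn_Ioc (by fun_prop))
    · apply (integrableOn_congr_fun (fun y hy => (if_neg (not_le.mpr hy.1) : _ = ε^2*y/(2*(k:ℝ)))) measurableSet_Ioc).mpr
      exact (Continuous.integrableOn_Ioc (by fun_prop))
  have hp1 : (∫ y in Ioc (0:ℝ) δ, y^(2*l+1)/(2*(k:ℝ))) = E / (4*(k:ℝ)*((l:ℝ)+1)) := by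
    simp only [div_eq_mul_inv]
    rw [integral_mul_const, integral_Ioc_eq_integral_Ioo,
      aux_Ioo_pow (2*l+1) (2*l+2) (by omega) δ hδ0.le, hδ2l2]
    have h1 : ((2*l+2 : ℕ):ℝ) = 2*(l:ℝ)+2 := by push_cast; ring
    rw [h1, div_eq_mul_inv, mul_assoc, ← mul_inv]
    congr 1
    ring
  have hp2 : (∫ y in Ioc δ 1, ε^2*y/(2*(k:ℝ))) = ε^2/(4*(k:ℝ)) - E/(4*(k:ℝ)) := by
    have heq : ∀ y : ℝ, ε^2*y/(2*(k:ℝ)) = y * (ε^2/(2*(k:ℝ))) := fun y => by ring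
    simp only [heq]
    rw [integral_mul_const]
    have hid : (∫ y in Ioc δ (1:ℝ), y) = ((1:ℝ)^2 - δ^2)/2 := by
      rw [← intervalIntegral.integral_of_le hδ1.le, integral_id]
    rw [hid, ← hεδ2]
    field_simp
    ring
  calc (∫ p in S, f p) = ∫ y : ℝ, ∫ x : ℝ, S.indicator f (x, y) := step1
  _ = ∫ y : ℝ, g y := by simp only [hgy]
  _ = ε^2 / (4*(k:ℝ)) - (l:ℝ) * E / (4*(k:ℝ)*((l:ℝ)+1)) := by
      rw [hgint, hp1, hp2]
      field_simp
      ring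
end

section
/- Let f be holomorphic near 0 in ℂⁿ, nonconstant with f(0)=0, let α ∈ [0,1), and suppose the energy bound ∫_{{|f| < ε}} |∂f|² dV = O(ε²) holds. Then for every δ < 2, the weighted gradient |∂f|²/|f|^δ is locally integrable near 0. -/
open MeasureTheory Set Filter

noncomputable instance (m : ℕ) : MeasurableSpace (EuclideanSpace ℂ (Fin m)) :=
  WithLp.measurableSpace 2 (Fin m → ℂ)

instance (m : ℕ) : BorelSpace (EuclideanSpace ℂ (Fin m)) := PiLp.borelSpace 2

/-- Let `f` be holomorphic near `0` in `ℂⁿ`, nonconstant with `f 0 = 0`, let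
`α ∈ [0,1)`, and suppose the energy bound `∫_{{|f| < ε}} |∂f|² dV = O(ε²)` holds.
Then for every `δ < 2`, the weighted gradient `|∂f|²/|f|^δ` is locally integrable
near `0`. -/
theorem stmt_18 {n : ℕ} (hn : 0 < n)
    (U : Set (EuclideanSpace ℂ (Fin n))) (hU_open : IsOpen U)
    (h0U : (0 : EuclideanSpace ℂ (Fin n)) ∈ U)
    (f : EuclideanSpace ℂ (Fin n) → ℂ) (hf : DifferentiableOn ℂ f U)
    (hf0 : f 0 = 0) (hnc : ¬ ∀ z ∈ U, f z = 0)
    (α : ℝ) (hα : α ∈ Set.Ico (0:ℝ) 1)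
    (C₁ ε₁ : ℝ) (hC₁ : 0 < C₁) (hε₁ : 0 < ε₁)
    (henergy : ∀ ε ∈ Set.Ioo (0:ℝ) ε₁,
      (∫⁻ z in {z ∈ U | ‖f z‖ < ε}, ENNReal.ofReal (‖fderiv ℂ f z‖ ^ 2))
        ≤ ENNReal.ofReal (C₁ * ε ^ 2)) :
    ∀ δ : ℝ, δ < 2 →
      ∃ V ∈ nhds (0 : EuclideanSpace ℂ (Fin n)),
        (∫⁻ z in V,
          ENNReal.ofReal (‖fderiv ℂ f z‖ ^ 2) * (ENNReal.ofReal ‖f z‖) ^ (-δ)) < ⊤ := by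
  intro δ hδ
  classical
  have hcont : ContinuousOn f U := hf.continuousOn
  -- basic constants
  set ε₀ : ℝ := min ε₁ 1 / 2 with hε₀def
  have hε₀pos : 0 < ε₀ := by
    have : 0 < min ε₁ 1 := lt_min hε₁ one_pos
    positivity
  have hε₀lt : ε₀ < ε₁ := by
    have h1 : min ε₁ 1 ≤ ε₁ := min_le_left _ _
    rw [hε₀def]; linarith
  have hε₀le : ε₀ ≤ 1 / 2 := by
    have h1 : min ε₁ 1 ≤ 1 := min_le_right _ _
    rw [hε₀def]; linarith
  set β : ℝ := max δ 1 with hβdef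
  have hβ1 : (1:ℝ) ≤ β := le_max_right _ _
  have hβ0 : (0:ℝ) ≤ β := by linarith
  have hβ2 : β < 2 := max_lt hδ one_lt_two
  have hδβ : δ ≤ β := le_max_left _ _
  -- the dyadic open sets
  set O : ℕ → Set (EuclideanSpace ℂ (Fin n)) :=
    fun j => {z ∈ U | ‖f z‖ < (2⁻¹:ℝ)^j * ε₀} with hOdef
  have hOopen : ∀ j, IsOpen (O j) := by
    intro j
    have hset : O j = U ∩ f ⁻¹' Metric.ball 0 ((2⁻¹:ℝ)^j * ε₀) := by
      ext z
      simp [hOdef, Metric.mem_ball, dist_zero_right]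
    rw [hset]
    exact hcont.isOpen_inter_preimage hU_open Metric.isOpen_ball
  have hOmeas : ∀ j, MeasurableSet (O j) := fun j => (hOopen j).measurableSet
  have hpowpos : ∀ j : ℕ, (0:ℝ) < (2⁻¹:ℝ)^j * ε₀ := by
    intro j; positivity
  have hpowle : ∀ j : ℕ, (2⁻¹:ℝ)^j * ε₀ ≤ ε₀ := by
    intro j
    have h1 : ((2:ℝ)⁻¹)^j ≤ 1 := pow_le_one₀ (by norm_num) (by norm_num)
    nlinarith
  -- the energy bound on each dyadic set
  have hE : ∀ j : ℕ, (∫⁻ z in O j, ENNReal.ofReal (‖fderiv ℂ f z‖ ^ 2))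
      ≤ ENNReal.ofReal (C₁ * ((2⁻¹:ℝ)^j * ε₀) ^ 2) :=
    fun j => henergy _ ⟨hpowpos j, lt_of_le_of_lt (hpowle j) hε₀lt⟩
  -- measurability of the gradient term
  have hgmeas : Measurable fun z : EuclideanSpace ℂ (Fin n) =>
      ENNReal.ofReal (‖fderiv ℂ f z‖ ^ 2) :=
    ENNReal.measurable_ofReal.comp ((measurable_fderiv ℂ f).norm.pow_const 2)
  -- the zero set
  set Z : Set (EuclideanSpace ℂ (Fin n)) := ⋂ j, O j with hZdef
  have hZsub : ∀ j, Z ⊆ O j := fun j => Set.iInter_subset _ j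
  have hZg : (∫⁻ z in Z, ENNReal.ofReal (‖fderiv ℂ f z‖ ^ 2)) = 0 := by
    refine le_antisymm ?_ zero_le
    have hbound : ∀ j : ℕ, (∫⁻ z in Z, ENNReal.ofReal (‖fderiv ℂ f z‖ ^ 2))
        ≤ ENNReal.ofReal (C₁ * ((2⁻¹:ℝ)^j * ε₀) ^ 2) :=
      fun j => (lintegral_mono_set (hZsub j)).trans (hE j)
    have h1 : Tendsto (fun j : ℕ => (2⁻¹:ℝ)^j) atTop (nhds 0) :=
      tendsto_pow_atTop_nhds_zero_of_lt_one (by norm_num) (by norm_num)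
    have h2 : Tendsto (fun j : ℕ => C₁ * ((2⁻¹:ℝ)^j * ε₀) ^ 2) atTop (nhds 0) := by
      have := ((h1.mul_const ε₀).pow 2).const_mul C₁
      simpa using this
    have htend : Tendsto (fun j : ℕ => ENNReal.ofReal (C₁ * ((2⁻¹:ℝ)^j * ε₀) ^ 2))
        atTop (nhds 0) := by
      simpa [Function.comp_def] using (ENNReal.continuous_ofReal.tendsto 0).comp h2
    exact ge_of_tendsto' htend hbound
  have hZF : (∫⁻ z in Z, ENNReal.ofReal (‖fderiv ℂ f z‖ ^ 2)
      * (ENNReal.ofReal ‖f z‖) ^ (-δ)) = 0 := by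
    have h0 : (fun z => ENNReal.ofReal (‖fderiv ℂ f z‖ ^ 2))
        =ᵐ[volume.restrict Z] 0 := (lintegral_eq_zero_iff hgmeas).mp hZg
    calc (∫⁻ z in Z, ENNReal.ofReal (‖fderiv ℂ f z‖ ^ 2)
          * (ENNReal.ofReal ‖f z‖) ^ (-δ))
        = ∫⁻ _ in Z, 0 := by
          refine lintegral_congr_ae (h0.mono fun z hz => ?_)
          simp only [Pi.zero_apply] at hz
          simp [hz]
      _ = 0 := lintegral_zero
  -- the shells
  set S : ℕ → Set (EuclideanSpace ℂ (Fin n)) := fun j => O j \ O (j+1) with hSdef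
  have hcover : O 0 ⊆ Z ∪ ⋃ j, S j := by
    intro z hz
    by_cases hzZ : ∀ j, z ∈ O j
    · exact Or.inl (Set.mem_iInter.mpr hzZ)
    · push_neg at hzZ
      right
      have hk : z ∉ O (Nat.find hzZ) := Nat.find_spec hzZ
      have hkpos : Nat.find hzZ ≠ 0 := fun h => (h ▸ hk) hz
      obtain ⟨m, hm⟩ := Nat.exists_eq_succ_of_ne_zero hkpos
      have hmem : z ∈ O m := not_not.mp (Nat.find_min hzZ (by omega))
      have hk' : z ∉ O (m + 1) := by rw [← Nat.succ_eq_add_one, ← hm]; exact hk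
      exact Set.mem_iUnion.mpr ⟨m, hmem, hk'⟩
  -- geometric data
  set r : ℝ := (2⁻¹:ℝ) ^ (2 - β) with hrdef
  have hr0 : 0 ≤ r := Real.rpow_nonneg (by norm_num) _
  have hr1 : r < 1 := Real.rpow_lt_one (by norm_num) (by norm_num) (by linarith)
  set K₀ : ℝ := (2⁻¹ * ε₀) ^ (-β) * (C₁ * ε₀ ^ 2) with hK₀def
  have hK₀0 : 0 ≤ K₀ := by
    have : (0:ℝ) ≤ (2⁻¹ * ε₀) ^ (-β) := Real.rpow_nonneg (by positivity) _
    positivity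
  -- the real shell computation
  have hshell_real : ∀ j : ℕ, ((2⁻¹:ℝ)^(j+1) * ε₀) ^ (-β) * (C₁ * ((2⁻¹:ℝ)^j * ε₀) ^ 2)
      = K₀ * r ^ j := by
    intro j
    have ha : (0:ℝ) < (2⁻¹:ℝ)^j := by positivity
    have hrj : r ^ j = ((2⁻¹:ℝ)^j) ^ (2 - β) := by
      rw [hrdef, ← Real.rpow_natCast ((2⁻¹:ℝ) ^ (2-β)) j, ← Real.rpow_mul (by norm_num),
        ← Real.rpow_natCast (2⁻¹:ℝ) j, ← Real.rpow_mul (by norm_num), mul_comm]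
    have key : ((2⁻¹:ℝ)^j) ^ (2 - β) = ((2⁻¹:ℝ)^j) ^ (-β) * ((2⁻¹:ℝ)^j) ^ (2:ℕ) := by
      rw [← Real.rpow_natCast ((2⁻¹:ℝ)^j) 2, ← Real.rpow_add ha]
      congr 1
      push_cast; ring
    have hsplit : ((2⁻¹:ℝ)^(j+1) * ε₀) ^ (-β)
        = ((2⁻¹:ℝ)^j) ^ (-β) * (2⁻¹ * ε₀) ^ (-β) := by
      rw [pow_succ, mul_assoc, Real.mul_rpow ha.le (by positivity)]
    rw [hsplit, hrj, key, hK₀def]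
    rw [mul_pow]
    ring
  -- bound the integral over each shell
  have hterm : ∀ j : ℕ, (∫⁻ z in S j, ENNReal.ofReal (‖fderiv ℂ f z‖ ^ 2)
      * (ENNReal.ofReal ‖f z‖) ^ (-δ)) ≤ ENNReal.ofReal K₀ * (ENNReal.ofReal r) ^ j := by
    intro j
    set c := ENNReal.ofReal (((2⁻¹:ℝ)^(j+1) * ε₀) ^ (-β)) with hcdef
    have hmeasS : MeasurableSet (S j) := (hOmeas j).diff (hOmeas (j+1))
    have hpt : ∀ z ∈ S j, ENNReal.ofReal (‖fderiv ℂ f z‖ ^ 2)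
        * (ENNReal.ofReal ‖f z‖) ^ (-δ)
        ≤ c * ENNReal.ofReal (‖fderiv ℂ f z‖ ^ 2) := by
      intro z hzS
      obtain ⟨hzj, hzj1⟩ := hzS
      have hupper : ‖f z‖ < (2⁻¹:ℝ)^j * ε₀ := hzj.2
      have hlower : (2⁻¹:ℝ)^(j+1) * ε₀ ≤ ‖f z‖ := by
        by_contra hcon
        exact hzj1 ⟨hzj.1, lt_of_not_ge hcon⟩
      have hx1 : ENNReal.ofReal ‖f z‖ ≤ 1 := by
        rw [show (1:ENNReal) = ENNReal.ofReal 1 by simp]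
        refine ENNReal.ofReal_le_ofReal ?_
        have := hpowle j
        linarith
      have hxL : ENNReal.ofReal ((2⁻¹:ℝ)^(j+1) * ε₀) ≤ ENNReal.ofReal ‖f z‖ :=
        ENNReal.ofReal_le_ofReal hlower
      have step1 : (ENNReal.ofReal ‖f z‖) ^ (-δ) ≤ (ENNReal.ofReal ‖f z‖) ^ (-β) :=
        ENNReal.rpow_le_rpow_of_exponent_ge hx1 (by linarith)
      have step2 : (ENNReal.ofReal ‖f z‖) ^ (-β)
          ≤ (ENNReal.ofReal ((2⁻¹:ℝ)^(j+1) * ε₀)) ^ (-β) := by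
        rw [ENNReal.rpow_neg, ENNReal.rpow_neg]
        exact ENNReal.inv_le_inv.mpr (ENNReal.rpow_le_rpow hxL hβ0)
      have step3 : (ENNReal.ofReal ((2⁻¹:ℝ)^(j+1) * ε₀)) ^ (-β) = c := by
        rw [hcdef, ENNReal.ofReal_rpow_of_pos (hpowpos (j+1))]
      calc ENNReal.ofReal (‖fderiv ℂ f z‖ ^ 2) * (ENNReal.ofReal ‖f z‖) ^ (-δ)
          ≤ ENNReal.ofReal (‖fderiv ℂ f z‖ ^ 2) * c := by
            exact mul_le_mul_right ((step1.trans step2).trans step3.le) _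
        _ = c * ENNReal.ofReal (‖fderiv ℂ f z‖ ^ 2) := mul_comm _ _
    calc (∫⁻ z in S j, ENNReal.ofReal (‖fderiv ℂ f z‖ ^ 2)
          * (ENNReal.ofReal ‖f z‖) ^ (-δ))
        ≤ ∫⁻ z in S j, c * ENNReal.ofReal (‖fderiv ℂ f z‖ ^ 2) :=
          setLIntegral_mono' hmeasS hpt
      _ = c * ∫⁻ z in S j, ENNReal.ofReal (‖fderiv ℂ f z‖ ^ 2) :=
          lintegral_const_mul c hgmeas
      _ ≤ c * ENNReal.ofReal (C₁ * ((2⁻¹:ℝ)^j * ε₀) ^ 2) := by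
          gcongr
          exact (lintegral_mono_set Set.diff_subset).trans (hE j)
      _ = ENNReal.ofReal (((2⁻¹:ℝ)^(j+1) * ε₀) ^ (-β) * (C₁ * ((2⁻¹:ℝ)^j * ε₀) ^ 2)) := by
          rw [hcdef, ← ENNReal.ofReal_mul (Real.rpow_nonneg (hpowpos (j+1)).le _)]
      _ = ENNReal.ofReal K₀ * (ENNReal.ofReal r) ^ j := by
          rw [hshell_real j, ENNReal.ofReal_mul hK₀0, ENNReal.ofReal_pow hr0]
  -- sum over shells
  have hgeo : (∑' j : ℕ, (ENNReal.ofReal r) ^ j) < ⊤ := by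
    rw [ENNReal.tsum_geometric]
    exact ENNReal.inv_lt_top.mpr (tsub_pos_of_lt (ENNReal.ofReal_lt_one.mpr hr1))
  have hsum : (∑' j : ℕ, ∫⁻ z in S j, ENNReal.ofReal (‖fderiv ℂ f z‖ ^ 2)
      * (ENNReal.ofReal ‖f z‖) ^ (-δ))
      ≤ ENNReal.ofReal K₀ * ∑' j : ℕ, (ENNReal.ofReal r) ^ j := by
    rw [← ENNReal.tsum_mul_left]
    exact ENNReal.tsum_le_tsum hterm
  -- conclusion
  refine ⟨O 0, (hOopen 0).mem_nhds ⟨h0U, by simp [hf0, hε₀pos]⟩, ?_⟩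
  calc (∫⁻ z in O 0, ENNReal.ofReal (‖fderiv ℂ f z‖ ^ 2)
        * (ENNReal.ofReal ‖f z‖) ^ (-δ))
      ≤ ∫⁻ z in Z ∪ ⋃ j, S j, ENNReal.ofReal (‖fderiv ℂ f z‖ ^ 2)
        * (ENNReal.ofReal ‖f z‖) ^ (-δ) := lintegral_mono_set hcover
    _ ≤ (∫⁻ z in Z, ENNReal.ofReal (‖fderiv ℂ f z‖ ^ 2)
        * (ENNReal.ofReal ‖f z‖) ^ (-δ))
        + ∫⁻ z in ⋃ j, S j, ENNReal.ofReal (‖fderiv ℂ f z‖ ^ 2)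
        * (ENNReal.ofReal ‖f z‖) ^ (-δ) := lintegral_union_le _ _ _
    _ ≤ 0 + ∑' j : ℕ, ∫⁻ z in S j, ENNReal.ofReal (‖fderiv ℂ f z‖ ^ 2)
        * (ENNReal.ofReal ‖f z‖) ^ (-δ) := by
          rw [hZF]
          gcongr
          exact lintegral_iUnion_le _ _
    _ ≤ ENNReal.ofReal K₀ * ∑' j : ℕ, (ENNReal.ofReal r) ^ j := by
          rw [zero_add]; exact hsum
    _ < ⊤ := ENNReal.mul_lt_top ENNReal.ofReal_lt_top hgeo
end
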